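/- Let (H,R) be a quasitriangular Hopf algebra, X and Y Yetter–Drinfeld modules over H. On the cotensor product X □_{₍R₎H} Y (inside X⊗Y), the map λ(Σ xᵢ⊗yᵢ) = Σ (xᵢ)₍₋₁₎R² ⊗ (xᵢ)₍₀₎ ⊗ R¹·yᵢ together with the diagonal H-action h·(Σ xᵢ⊗yᵢ) = Σ h₁·xᵢ ⊗ h₂·yᵢ defines a left-left Yetter–Drinfeld module structure on X □_{₍R₎H} Y. -/

import Mathlib

open TensorProduct

noncomputable section

/-- Scalar multiplication by a fixed `h : H` as a `k`-linear map. -/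
def smulL (k : Type) {H M : Type} [CommRing k] [Ring H] [AddCommGroup M]
    [Module k M] [Module H M] [SMulCommClass H k M] (h : H) : M →ₗ[k] M where
  toFun m := h • m
  map_add' := smul_add h
  map_smul' c m := smul_comm h c m

/-- The module action `H ⊗ M → M` as a linear map. -/
def actT (k H M : Type) [CommRing k] [Ring H] [Algebra k H] [AddCommGroup M]
    [Module k M] [Module H M] [IsScalarTower k H M] [SMulCommClass H k M] :
    H ⊗[k] M →ₗ[k] M :=
  TensorProduct.lift
    { toFun := fun h => smulL k h
      map_add' := fun h h' => LinearMap.ext fun m => add_smul h h' m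
      map_smul' := fun c h => LinearMap.ext fun m => smul_assoc c h m }

/-- Quasitriangular structure, with the R-matrix given by a finite family
`R = ∑ i, R1 i ⊗ R2 i`, satisfying (QT1)-(QT4) and invertibility. -/
structure QT (k H : Type) [CommRing k] [Ring H] [HopfAlgebra k H]
    {ι : Type} [Fintype ι] (R1 R2 : ι → H) : Prop where
  qt1a : ∑ i, Coalgebra.counit (R := k) (R1 i) • R2 i = (1 : H)
  qt1b : ∑ i, Coalgebra.counit (R := k) (R2 i) • R1 i = (1 : H)
  qt2 : ∑ i, Coalgebra.comul (R := k) (R1 i) ⊗ₜ[k] R2 i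
      = ∑ i, ∑ j, (R1 i ⊗ₜ[k] R1 j) ⊗ₜ[k] (R2 i * R2 j)
  qt3 : ∑ i, R1 i ⊗ₜ[k] Coalgebra.comul (R := k) (R2 i)
      = ∑ i, ∑ j, (R1 i * R1 j) ⊗ₜ[k] (R2 j ⊗ₜ[k] R2 i)
  qt4 : ∀ h : H, (∑ i, R1 i ⊗ₜ[k] R2 i) * Coalgebra.comul (R := k) h
      = TensorProduct.comm k H H (Coalgebra.comul (R := k) h) * (∑ i, R1 i ⊗ₜ[k] R2 i)
  isUnit : IsUnit (∑ i, R1 i ⊗ₜ[k] R2 i)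

/-- The left adjoint action `h ⊗ x ↦ h₁ x S(h₂)` as a linear map. -/
def adjT (k H : Type) [CommRing k] [Ring H] [HopfAlgebra k H] : H ⊗[k] H →ₗ[k] H :=
  (LinearMap.mul' k H) ∘ₗ
    (LinearMap.lTensor H (LinearMap.mul' k H)) ∘ₗ
    (LinearMap.lTensor H ((TensorProduct.map (LinearMap.id : H →ₗ[k] H)
        (HopfAlgebra.antipode (R := k))) ∘ₗ (TensorProduct.comm k H H).toLinearMap)) ∘ₗ
    (TensorProduct.assoc k H H H).toLinearMap ∘ₗ
    (LinearMap.rTensor H (Coalgebra.comul (R := k)))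

/-- The diagonal action of `H` on `M ⊗ N`, `h ⊗ (m ⊗ n) ↦ h₁·m ⊗ h₂·n`. -/
def actD (k H M N : Type) [CommRing k] [Ring H] [HopfAlgebra k H]
    [AddCommGroup M] [Module k M] [Module H M] [IsScalarTower k H M] [SMulCommClass H k M]
    [AddCommGroup N] [Module k N] [Module H N] [IsScalarTower k H N] [SMulCommClass H k N] :
    H ⊗[k] (M ⊗[k] N) →ₗ[k] M ⊗[k] N :=
  (TensorProduct.map (actT k H M) (actT k H N)) ∘ₗ
    (TensorProduct.tensorTensorTensorComm k H H M N).toLinearMap ∘ₗ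
    (LinearMap.rTensor (M ⊗[k] N) (Coalgebra.comul (R := k)))

/-- Left-hand side of the Yetter-Drinfeld compatibility condition,
`h ⊗ m ↦ h₁ m₍₋₁₎ ⊗ h₂ · m₍₀₎`, relative to an action map `act` and coaction `lam`. -/
def ydLa (k H M : Type) [CommRing k] [Ring H] [HopfAlgebra k H] [AddCommGroup M] [Module k M]
    (act : H ⊗[k] M →ₗ[k] M) (lam : M →ₗ[k] H ⊗[k] M) : H ⊗[k] M →ₗ[k] H ⊗[k] M :=
  (TensorProduct.map (LinearMap.mul' k H) act) ∘ₗ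
    (TensorProduct.tensorTensorTensorComm k H H H M).toLinearMap ∘ₗ
    (TensorProduct.map (Coalgebra.comul (R := k)) lam)

/-- Right-hand side of the Yetter-Drinfeld compatibility condition,
`h ⊗ m ↦ (h₁·m)₍₋₁₎ h₂ ⊗ (h₁·m)₍₀₎`. -/
def ydRa (k H M : Type) [CommRing k] [Ring H] [HopfAlgebra k H] [AddCommGroup M] [Module k M]
    (act : H ⊗[k] M →ₗ[k] M) (lam : M →ₗ[k] H ⊗[k] M) : H ⊗[k] M →ₗ[k] H ⊗[k] M :=
  (LinearMap.rTensor M ((LinearMap.mul' k H) ∘ₗ (TensorProduct.comm k H H).toLinearMap)) ∘ₗ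
    (TensorProduct.assoc k H H M).symm.toLinearMap ∘ₗ
    (LinearMap.lTensor H (lam ∘ₗ act)) ∘ₗ
    (TensorProduct.assoc k H H M).toLinearMap ∘ₗ
    (LinearMap.rTensor M (TensorProduct.comm k H H).toLinearMap) ∘ₗ
    (LinearMap.rTensor M (Coalgebra.comul (R := k)))


section CotensorYD

variable (k H X Y : Type) [Field k] [Ring H] [HopfAlgebra k H]
variable [AddCommGroup X] [Module k X] [Module H X] [IsScalarTower k H X] [SMulCommClass H k X]
variable [AddCommGroup Y] [Module k Y] [Module H Y] [IsScalarTower k H Y] [SMulCommClass H k Y]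
variable {ι : Type} [Fintype ι] (R1 R2 : ι → H)

/-- The coaction `λ(x ⊗ y) = ∑ x₍₋₁₎R² ⊗ (x₍₀₎ ⊗ R¹·y)` on `X ⊗ Y`. -/
def condL (lamX : X →ₗ[k] H ⊗[k] X) : X ⊗[k] Y →ₗ[k] H ⊗[k] (X ⊗[k] Y) :=
  ∑ i, (TensorProduct.map (LinearMap.mulRight k (R2 i))
      (LinearMap.lTensor X (smulL k (R1 i) : Y →ₗ[k] Y))) ∘ₗ
    (TensorProduct.assoc k H X Y).toLinearMap ∘ₗ (LinearMap.rTensor Y lamX)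

/-- The alternative expression `∑ S(R¹)y₍₋₁₎ ⊗ (R²·x ⊗ y₍₀₎)`. -/
def condR (lamY : Y →ₗ[k] H ⊗[k] Y) : X ⊗[k] Y →ₗ[k] H ⊗[k] (X ⊗[k] Y) :=
  ∑ i, (TensorProduct.map (LinearMap.mulLeft k (HopfAlgebra.antipode (R := k) (R1 i)))
      (LinearMap.rTensor Y (smulL k (R2 i) : X →ₗ[k] X))) ∘ₗ
    (TensorProduct.assoc k H X Y).toLinearMap ∘ₗ
    (LinearMap.rTensor Y (TensorProduct.comm k X H).toLinearMap) ∘ₗ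
    (TensorProduct.assoc k X H Y).symm.toLinearMap ∘ₗ (LinearMap.lTensor X lamY)

end CotensorYD

section Infra
set_option linter.unusedSectionVars false
set_option maxHeartbeats 1000000
set_option synthInstance.maxHeartbeats 400000

variable {k H : Type} [Field k] [Ring H] [HopfAlgebra k H]
variable {M : Type} [AddCommGroup M] [Module k M]

local notation "Δ" => Coalgebra.comul (R := k) (A := H)
local notation "εH" => Coalgebra.counit (R := k) (A := H)
local notation "SH" => HopfAlgebra.antipode (R := k) (A := H)

@[simp] lemma smulL_apply {M' : Type} [AddCommGroup M'] [Module k M'] [Module H M']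
    [SMulCommClass H k M'] (h : H) (m : M') : smulL k h m = h • m := rfl

@[simp] lemma actT_tmul {M' : Type} [AddCommGroup M'] [Module k M'] [Module H M']
    [IsScalarTower k H M'] [SMulCommClass H k M'] (h : H) (m : M') :
    actT k H M' (h ⊗ₜ[k] m) = h • m := rfl

variable (k H M) in
/-- collapse `(u ⊗ m) ⊗ v ↦ u*v ⊗ m`. -/
def postMul : (H ⊗[k] M) ⊗[k] H →ₗ[k] H ⊗[k] M :=
  (LinearMap.rTensor M (LinearMap.mul' k H)) ∘ₗ
    (TensorProduct.assoc k H H M).symm.toLinearMap ∘ₗ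
    (LinearMap.lTensor H (TensorProduct.comm k M H).toLinearMap) ∘ₗ
    (TensorProduct.assoc k H M H).toLinearMap

@[simp] lemma postMul_tmul (a : H) (m : M) (v : H) :
    postMul k H M ((a ⊗ₜ[k] m) ⊗ₜ[k] v) = (a * v) ⊗ₜ[k] m := by
  simp [postMul]

lemma postMul_tmul' (u : H ⊗[k] M) (v : H) :
    postMul k H M (u ⊗ₜ[k] v) = LinearMap.rTensor M (LinearMap.mulRight k v) u := by
  induction u using TensorProduct.induction_on with
  | zero => simp
  | tmul a m => simp
  | add u₁ u₂ h1 h2 => simp [add_tmul, h1, h2]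

lemma collapse_eval (b : H) (u : H ⊗[k] M) :
    (LinearMap.rTensor M ((LinearMap.mul' k H) ∘ₗ (TensorProduct.comm k H H).toLinearMap))
      ((TensorProduct.assoc k H H M).symm (b ⊗ₜ[k] u))
      = LinearMap.rTensor M (LinearMap.mulRight k b) u := by
  induction u using TensorProduct.induction_on with
  | zero => simp
  | tmul a m => simp
  | add u₁ u₂ h1 h2 => simp [tmul_add, h1, h2]

lemma ydRa_tmul (act : H ⊗[k] M →ₗ[k] M) (lam : M →ₗ[k] H ⊗[k] M) (g : H) (m : M) :
    ydRa k H M act lam (g ⊗ₜ[k] m)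
      = postMul k H M
          ((LinearMap.rTensor H (lam ∘ₗ act ∘ₗ (TensorProduct.mk k H M).flip m)) (Δ g)) := by
  simp only [ydRa, LinearMap.comp_apply, LinearMap.rTensor_tmul]
  generalize Δ g = v
  induction v using TensorProduct.induction_on with
  | zero => simp
  | tmul a b =>
      simp only [LinearMap.rTensor_tmul, LinearEquiv.coe_coe, TensorProduct.comm_tmul,
        TensorProduct.assoc_tmul, LinearMap.lTensor_tmul, LinearMap.comp_apply,
        TensorProduct.mk_apply, LinearMap.flip_apply, postMul_tmul']
      induction (lam (act (a ⊗ₜ[k] m))) using TensorProduct.induction_on with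
      | zero => simp
      | tmul c m' => simp
      | add u₁ u₂ h1 h2 => simp [tmul_add, h1, h2]
  | add u₁ u₂ h1 h2 => simp only [map_add, add_tmul, h1, h2]

lemma ydLa_tmul (act : H ⊗[k] M →ₗ[k] M) (lam : M →ₗ[k] H ⊗[k] M) (g : H) (m : M) :
    ydLa k H M act lam (g ⊗ₜ[k] m)
      = (TensorProduct.map (LinearMap.mul' k H) act)
          (TensorProduct.tensorTensorTensorComm k H H H M ((Δ g) ⊗ₜ[k] lam m)) := by
  simp [ydLa]

lemma lam_act_eq (act : H ⊗[k] M →ₗ[k] M) (lam : M →ₗ[k] H ⊗[k] M) (h : H) (m : M)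
    (hyd : ∀ g : H, ydLa k H M act lam (g ⊗ₜ[k] m) = ydRa k H M act lam (g ⊗ₜ[k] m)) :
    lam (act (h ⊗ₜ[k] m))
      = postMul k H M ((TensorProduct.map
          ((ydLa k H M act lam) ∘ₗ (TensorProduct.mk k H M).flip m) SH) (Δ h)) := by
  set F : H →ₗ[k] H ⊗[k] M := lam ∘ₗ act ∘ₗ (TensorProduct.mk k H M).flip m with hF
  set r := Coalgebra.Repr.arbitrary k h with hrdef
  have hr : ∑ p ∈ r.index, r.left p ⊗ₜ[k] r.right p = Δ h := r.eq
  have e3 : ∀ (v : H ⊗[k] H) (c : H),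
      (LinearMap.lTensor H ((LinearMap.mul' k H) ∘ₗ LinearMap.lTensor H SH))
        ((TensorProduct.assoc k H H H) (v ⊗ₜ[k] c))
      = LinearMap.lTensor H (LinearMap.mulRight k (SH c)) v := by
    intro v c
    induction v using TensorProduct.induction_on with
    | zero => simp
    | tmul a b => simp
    | add u₁ u₂ h1 h2 => simp [add_tmul, h1, h2]
  have hsum : ∑ p ∈ r.index, (εH (r.right p)) • (r.left p) = h := by
    have h1 := congrArg (TensorProduct.rid k H) (Coalgebra.sum_tmul_counit_eq r)
    rw [map_sum] at h1
    have h2 : ∀ p ∈ r.index, (TensorProduct.rid k H) ((r.left p) ⊗ₜ[k] εH (r.right p))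
        = (εH (r.right p)) • (r.left p) := fun p _ => TensorProduct.rid_tmul _ _
    rw [Finset.sum_congr rfl h2, TensorProduct.rid_tmul, one_smul] at h1
    exact h1
  have E : ∑ p ∈ r.index,
        (LinearMap.lTensor H (LinearMap.mulRight k (SH (r.right p)))) (Δ (r.left p))
      = h ⊗ₜ[k] (1 : H) := by
    have step1 : ∑ p ∈ r.index,
          (LinearMap.lTensor H (LinearMap.mulRight k (SH (r.right p)))) (Δ (r.left p))
        = (LinearMap.lTensor H ((LinearMap.mul' k H) ∘ₗ LinearMap.lTensor H SH))
            ((TensorProduct.assoc k H H H) ((LinearMap.rTensor H Δ) (Δ h))) := by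
      rw [← hr]
      simp only [map_sum]
      exact (Finset.sum_congr rfl fun p _ => by rw [LinearMap.rTensor_tmul, e3]).symm
    rw [step1, Coalgebra.coassoc_apply, ← hr]
    simp only [map_sum]
    have e4 : ∀ p ∈ r.index,
        (LinearMap.lTensor H ((LinearMap.mul' k H) ∘ₗ LinearMap.lTensor H SH))
          ((LinearMap.lTensor H Δ) ((r.left p) ⊗ₜ[k] (r.right p)))
        = ((εH (r.right p)) • (r.left p)) ⊗ₜ[k] (1 : H) := by
      intro p _
      simp only [LinearMap.lTensor_tmul, LinearMap.comp_apply,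
        HopfAlgebra.mul_antipode_lTensor_comul_apply, Algebra.algebraMap_eq_smul_one,
        tmul_smul]
      rw [TensorProduct.smul_tmul']
    rw [Finset.sum_congr rfl e4, ← TensorProduct.sum_tmul, hsum]
  have key : ∀ g : H, ydRa k H M act lam (g ⊗ₜ[k] m)
      = postMul k H M ((LinearMap.rTensor H F) (Δ g)) := fun g => ydRa_tmul act lam g m
  have step3aux : ∀ (v : H ⊗[k] H) (c : H),
      postMul k H M ((LinearMap.rTensor H F) ((LinearMap.lTensor H (LinearMap.mulRight k c)) v))
      = LinearMap.rTensor M (LinearMap.mulRight k c) (postMul k H M ((LinearMap.rTensor H F) v)) := by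
    intro v c
    induction v using TensorProduct.induction_on with
    | zero => simp
    | tmul a b =>
        rw [LinearMap.lTensor_tmul, LinearMap.rTensor_tmul, LinearMap.rTensor_tmul,
          postMul_tmul', postMul_tmul', LinearMap.mulRight_apply,
          ← LinearMap.rTensor_comp_apply, ← LinearMap.mulRight_mul]
    | add u₁ u₂ h1 h2 => simp only [map_add, h1, h2]
  calc lam (act (h ⊗ₜ[k] m))
      = postMul k H M ((LinearMap.rTensor H F) (h ⊗ₜ[k] (1 : H))) := by
        rw [LinearMap.rTensor_tmul, postMul_tmul', LinearMap.mulRight_one,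
          LinearMap.rTensor_id]
        simp [hF]
    _ = postMul k H M ((LinearMap.rTensor H F)
          (∑ p ∈ r.index, (LinearMap.lTensor H
            (LinearMap.mulRight k (SH (r.right p)))) (Δ (r.left p)))) := by rw [E]
    _ = ∑ p ∈ r.index, postMul k H M ((TensorProduct.map
          ((ydRa k H M act lam) ∘ₗ (TensorProduct.mk k H M).flip m) SH)
            ((r.left p) ⊗ₜ[k] (r.right p))) := by
        simp only [map_sum]
        refine Finset.sum_congr rfl fun p _ => ?_
        rw [step3aux]
        simp only [TensorProduct.map_tmul, LinearMap.comp_apply, LinearMap.flip_apply,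
          TensorProduct.mk_apply]
        rw [key, postMul_tmul']
    _ = postMul k H M ((TensorProduct.map
          ((ydLa k H M act lam) ∘ₗ (TensorProduct.mk k H M).flip m) SH) (Δ h)) := by
        rw [← hr]
        simp only [map_sum]
        refine Finset.sum_congr rfl fun p _ => ?_
        simp only [TensorProduct.map_tmul, LinearMap.comp_apply, LinearMap.flip_apply,
          TensorProduct.mk_apply]
        rw [hyd]

end Infra

section CondAux
set_option linter.unusedSectionVars false
set_option maxHeartbeats 1000000
set_option synthInstance.maxHeartbeats 400000

variable {k H X Y : Type} [Field k] [Ring H] [HopfAlgebra k H]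
variable [AddCommGroup X] [Module k X] [Module H X] [IsScalarTower k H X] [SMulCommClass H k X]
variable [AddCommGroup Y] [Module k Y] [Module H Y] [IsScalarTower k H Y] [SMulCommClass H k Y]
variable {ι : Type} [Fintype ι] {R1 R2 : ι → H}

local notation "Δ" => Coalgebra.comul (R := k) (A := H)
local notation "εH" => Coalgebra.counit (R := k) (A := H)
local notation "SH" => HopfAlgebra.antipode (R := k) (A := H)

def condL' (lamX : X →ₗ[k] H ⊗[k] X) : X ⊗[k] Y →ₗ[k] H ⊗[k] (X ⊗[k] Y) :=
  ∑ i, (TensorProduct.map (LinearMap.mulRight k (R2 i))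
      (LinearMap.lTensor X (smulL k (R1 i) : Y →ₗ[k] Y))) ∘ₗ
    (TensorProduct.assoc k H X Y).toLinearMap ∘ₗ (LinearMap.rTensor Y lamX)

def condR' (lamY : Y →ₗ[k] H ⊗[k] Y) : X ⊗[k] Y →ₗ[k] H ⊗[k] (X ⊗[k] Y) :=
  ∑ i, (TensorProduct.map (LinearMap.mulLeft k (HopfAlgebra.antipode (R := k) (R1 i)))
      (LinearMap.rTensor Y (smulL k (R2 i) : X →ₗ[k] X))) ∘ₗ
    (TensorProduct.assoc k H X Y).toLinearMap ∘ₗ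
    (LinearMap.rTensor Y (TensorProduct.comm k X H).toLinearMap) ∘ₗ
    (TensorProduct.assoc k X H Y).symm.toLinearMap ∘ₗ (LinearMap.lTensor X lamY)

lemma condL'_tmul (lamX : X →ₗ[k] H ⊗[k] X) (x : X) (y : Y) :
    condL' (R1 := R1) (R2 := R2) lamX (x ⊗ₜ[k] y)
      = ∑ i, (TensorProduct.map (LinearMap.mulRight k (R2 i))
          ((TensorProduct.mk k X Y).flip ((R1 i) • y))) (lamX x) := by
  simp only [condL', LinearMap.sum_apply, LinearMap.comp_apply, LinearMap.rTensor_tmul]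
  refine Finset.sum_congr rfl fun i _ => ?_
  induction (lamX x) using TensorProduct.induction_on with
  | zero => simp
  | tmul a m => simp
  | add u v h1 h2 => simp only [map_add, add_tmul, h1, h2]

lemma condR'_tmul (lamY : Y →ₗ[k] H ⊗[k] Y) (x : X) (y : Y) :
    condR' (R1 := R1) (R2 := R2) lamY (x ⊗ₜ[k] y)
      = ∑ i, (TensorProduct.map (LinearMap.mulLeft k (SH (R1 i)))
          (TensorProduct.mk k X Y ((R2 i) • x))) (lamY y) := by
  simp only [condR', LinearMap.sum_apply, LinearMap.comp_apply, LinearMap.lTensor_tmul]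
  refine Finset.sum_congr rfl fun i _ => ?_
  induction (lamY y) using TensorProduct.induction_on with
  | zero => simp
  | tmul b n => simp
  | add u v h1 h2 => simp only [map_add, tmul_add, h1, h2]

lemma counit_law (hqt : QT k H R1 R2) (lamX : X →ₗ[k] H ⊗[k] X)
    (hXcounit : ∀ x : X, (TensorProduct.lid k X)
        ((LinearMap.rTensor X εH) (lamX x)) = x) (w : X ⊗[k] Y) :
    (TensorProduct.lid k (X ⊗[k] Y))
        ((LinearMap.rTensor (X ⊗[k] Y) εH) (condL' (R1 := R1) (R2 := R2) lamX w)) = w := by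
  have sub : ∀ (t : H ⊗[k] X) (y : Y),
      (TensorProduct.lid k (X ⊗[k] Y)) ((LinearMap.rTensor (X ⊗[k] Y) εH)
        (∑ i, (TensorProduct.map (LinearMap.mulRight k (R2 i))
          ((TensorProduct.mk k X Y).flip ((R1 i) • y))) t))
      = ((TensorProduct.lid k X) ((LinearMap.rTensor X εH) t)) ⊗ₜ[k] y := by
    intro t y
    induction t using TensorProduct.induction_on with
    | zero => simp
    | tmul a m =>
        simp only [TensorProduct.map_tmul, LinearMap.mulRight_apply, LinearMap.flip_apply,
          TensorProduct.mk_apply, map_sum, LinearMap.rTensor_tmul, TensorProduct.lid_tmul,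
          Bialgebra.counit_mul]
        calc ∑ i, (εH a * εH (R2 i)) • (m ⊗ₜ[k] ((R1 i) • y))
            = εH a • ∑ i, m ⊗ₜ[k] ((εH (R2 i) • R1 i) • y) := by
              rw [Finset.smul_sum]
              refine Finset.sum_congr rfl fun i _ => ?_
              rw [smul_assoc]
              rw [TensorProduct.tmul_smul (εH (R2 i)) m ((R1 i) • y), smul_smul]
          _ = εH a • (m ⊗ₜ[k] y) := by
              rw [← TensorProduct.tmul_sum, ← Finset.sum_smul, hqt.qt1b, one_smul]
          _ = (εH a • m) ⊗ₜ[k] y := TensorProduct.smul_tmul' _ _ _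
    | add u v h1 h2 => simp only [map_add, Finset.sum_add_distrib, h1, h2, add_tmul]
  induction w using TensorProduct.induction_on with
  | zero => simp
  | tmul x y => rw [condL'_tmul, sub, hXcounit]
  | add u v h1 h2 => rw [map_add, map_add, map_add, h1, h2]

lemma mulRight_tmul (b d : H) :
    (LinearMap.mulRight k (b ⊗ₜ[k] d) : H ⊗[k] H →ₗ[k] H ⊗[k] H)
      = TensorProduct.map (LinearMap.mulRight k b) (LinearMap.mulRight k d) := by
  apply TensorProduct.ext'
  intro a c
  simp [Algebra.TensorProduct.tmul_mul_tmul]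

lemma coassoc_law (hqt : QT k H R1 R2) (lamX : X →ₗ[k] H ⊗[k] X)
    (hXcoassoc : (LinearMap.rTensor X Δ) ∘ₗ lamX
        = (TensorProduct.assoc k H H X).symm.toLinearMap ∘ₗ
          (LinearMap.lTensor H lamX) ∘ₗ lamX) (w : X ⊗[k] Y) :
    (LinearMap.rTensor (X ⊗[k] Y) Δ) (condL' (R1 := R1) (R2 := R2) lamX w)
      = (TensorProduct.assoc k H H (X ⊗[k] Y)).symm
          ((LinearMap.lTensor H (condL' (R1 := R1) (R2 := R2) lamX))
            (condL' (R1 := R1) (R2 := R2) lamX w)) := by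
  induction w using TensorProduct.induction_on with
  | zero => simp
  | add u v h1 h2 => rw [map_add, map_add, map_add, map_add, h1, h2]
  | tmul x y =>
    have sub1 : ∀ (t : H ⊗[k] X) (i : ι) (c : Y),
        (LinearMap.rTensor (X ⊗[k] Y) Δ)
          ((TensorProduct.map (LinearMap.mulRight k (R2 i)) ((TensorProduct.mk k X Y).flip c)) t)
        = (TensorProduct.map ((LinearMap.mulRight k (Δ (R2 i))) ∘ₗ Δ)
            ((TensorProduct.mk k X Y).flip c)) t := by
      intro t i c
      induction t using TensorProduct.induction_on with
      | zero => simp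
      | tmul a m => simp [Bialgebra.comul_mul]
      | add u v h1 h2 => rw [map_add, map_add, map_add, h1, h2]
    have sub2 : ∀ (a : H) (m : X),
        ∑ i, (Δ a * Δ (R2 i)) ⊗ₜ[k] (m ⊗ₜ[k] ((R1 i) • y))
        = ∑ i, ∑ j, (Δ a * (R2 j ⊗ₜ[k] R2 i)) ⊗ₜ[k] (m ⊗ₜ[k] ((R1 i) • ((R1 j) • y))) := by
      intro a m
      have := congrArg ((TensorProduct.map (LinearMap.mulLeft k (Δ a))
          ((TensorProduct.mk k X Y m) ∘ₗ (actT k H Y) ∘ₗ (TensorProduct.mk k H Y).flip y)) ∘ₗ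
          (TensorProduct.comm k H (H ⊗[k] H)).toLinearMap) hqt.qt3
      simpa [map_sum, mul_smul] using this
    have Lform : ∀ t : H ⊗[k] X,
        ∑ i, (TensorProduct.map ((LinearMap.mulRight k (Δ (R2 i))) ∘ₗ Δ)
            ((TensorProduct.mk k X Y).flip ((R1 i) • y))) t
        = ∑ i, ∑ j, (TensorProduct.map
            (TensorProduct.map (LinearMap.mulRight k (R2 j)) (LinearMap.mulRight k (R2 i)))
            ((TensorProduct.mk k X Y).flip ((R1 i) • ((R1 j) • y))))
              ((LinearMap.rTensor X Δ) t) := by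
      intro t
      induction t using TensorProduct.induction_on with
      | zero => simp
      | tmul a m =>
          have h2 := sub2 a m
          simp only [TensorProduct.map_tmul, LinearMap.comp_apply, LinearMap.mulRight_apply,
            LinearMap.flip_apply, TensorProduct.mk_apply, LinearMap.rTensor_tmul,
            ← mulRight_tmul]
          exact h2
      | add u v h1 h2 => simp only [map_add, Finset.sum_add_distrib, h1, h2]
    have sub5 : ∀ (u : (H ⊗[k] H) ⊗[k] X) (i j : ι) (c : Y),
        (TensorProduct.map
            (TensorProduct.map (LinearMap.mulRight k (R2 i)) (LinearMap.mulRight k (R2 j)))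
            ((TensorProduct.mk k X Y).flip c)) u
        = (TensorProduct.assoc k H H (X ⊗[k] Y)).symm
            ((TensorProduct.map (LinearMap.mulRight k (R2 i))
              (TensorProduct.map (LinearMap.mulRight k (R2 j)) ((TensorProduct.mk k X Y).flip c)))
                ((TensorProduct.assoc k H H X) u)) := by
      intro u i j c
      induction u using TensorProduct.induction_on with
      | zero => simp
      | tmul v m =>
          induction v using TensorProduct.induction_on with
          | zero => simp [TensorProduct.zero_tmul]
          | tmul a b => simp
          | add v1 v2 h1 h2 => rw [TensorProduct.add_tmul, map_add, map_add, map_add, map_add, h1, h2]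
      | add u v h1 h2 => rw [map_add, map_add, map_add, map_add, h1, h2]
    have hco : (TensorProduct.assoc k H H X) ((LinearMap.rTensor X Δ) (lamX x))
        = (LinearMap.lTensor H lamX) (lamX x) := by
      have hx := LinearMap.congr_fun hXcoassoc x
      simp only [LinearMap.comp_apply, LinearEquiv.coe_coe] at hx
      rw [hx, LinearEquiv.apply_symm_apply]
    have Rform : ∀ (t : H ⊗[k] X) (i : ι) (c : Y),
        (TensorProduct.assoc k H H (X ⊗[k] Y)).symm
          ((LinearMap.lTensor H (condL' (R1 := R1) (R2 := R2) lamX))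
            ((TensorProduct.map (LinearMap.mulRight k (R2 i))
              ((TensorProduct.mk k X Y).flip c)) t))
        = ∑ j, (TensorProduct.assoc k H H (X ⊗[k] Y)).symm
            ((TensorProduct.map (LinearMap.mulRight k (R2 i))
              ((TensorProduct.map (LinearMap.mulRight k (R2 j))
                ((TensorProduct.mk k X Y).flip ((R1 j) • c))) ∘ₗ lamX)) t) := by
      intro t i c
      induction t using TensorProduct.induction_on with
      | zero => simp
      | tmul a m =>
          simp only [TensorProduct.map_tmul, LinearMap.mulRight_apply, LinearMap.flip_apply,
            TensorProduct.mk_apply, LinearMap.lTensor_tmul, LinearMap.comp_apply]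
          rw [condL'_tmul, TensorProduct.tmul_sum, map_sum]
      | add u v h1 h2 =>
          simp only [map_add, h1, h2, Finset.sum_add_distrib]
    calc (LinearMap.rTensor (X ⊗[k] Y) Δ) (condL' (R1 := R1) (R2 := R2) lamX (x ⊗ₜ[k] y))
        = ∑ i, (TensorProduct.map ((LinearMap.mulRight k (Δ (R2 i))) ∘ₗ Δ)
            ((TensorProduct.mk k X Y).flip ((R1 i) • y))) (lamX x) := by
          rw [condL'_tmul, map_sum]
          exact Finset.sum_congr rfl fun i _ => sub1 (lamX x) i ((R1 i) • y)
      _ = ∑ i, ∑ j, (TensorProduct.map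
            (TensorProduct.map (LinearMap.mulRight k (R2 j)) (LinearMap.mulRight k (R2 i)))
            ((TensorProduct.mk k X Y).flip ((R1 i) • ((R1 j) • y))))
              ((LinearMap.rTensor X Δ) (lamX x)) := Lform (lamX x)
      _ = ∑ i, ∑ j, (TensorProduct.map
            (TensorProduct.map (LinearMap.mulRight k (R2 i)) (LinearMap.mulRight k (R2 j)))
            ((TensorProduct.mk k X Y).flip ((R1 j) • ((R1 i) • y))))
              ((LinearMap.rTensor X Δ) (lamX x)) := Finset.sum_comm
      _ = ∑ i, ∑ j, (TensorProduct.assoc k H H (X ⊗[k] Y)).symm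
            ((TensorProduct.map (LinearMap.mulRight k (R2 i))
              ((TensorProduct.map (LinearMap.mulRight k (R2 j))
                ((TensorProduct.mk k X Y).flip ((R1 j) • ((R1 i) • y)))) ∘ₗ lamX)) (lamX x)) := by
          refine Finset.sum_congr rfl fun i _ => Finset.sum_congr rfl fun j _ => ?_
          rw [sub5 _ i j _, hco]
          congr 1
          generalize (lamX x) = t
          induction t using TensorProduct.induction_on with
          | zero => simp
          | tmul a m => simp
          | add u v h1 h2 => rw [map_add, map_add, map_add, h1, h2]
      _ = (TensorProduct.assoc k H H (X ⊗[k] Y)).symm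
            ((LinearMap.lTensor H (condL' (R1 := R1) (R2 := R2) lamX))
              (condL' (R1 := R1) (R2 := R2) lamX (x ⊗ₜ[k] y))) := by
          rw [condL'_tmul, map_sum, map_sum]
          exact (Finset.sum_congr rfl fun i _ => Rform (lamX x) i ((R1 i) • y)).symm

lemma RinvRm (hqt : QT k H R1 R2) :
    (∑ i, (SH (R1 i)) ⊗ₜ[k] R2 i) * (∑ i, R1 i ⊗ₜ[k] R2 i) = 1 := by
  have h2 := congrArg (TensorProduct.map
      ((LinearMap.mul' k H) ∘ₗ (LinearMap.rTensor H SH)) (LinearMap.id : H →ₗ[k] H)) hqt.qt2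
  simp only [map_sum, TensorProduct.map_tmul, LinearMap.comp_apply, LinearMap.id_coe, id_eq,
    HopfAlgebra.mul_antipode_rTensor_comul_apply, Algebra.algebraMap_eq_smul_one,
    LinearMap.rTensor_tmul, LinearMap.mul'_apply] at h2
  rw [Finset.sum_mul_sum]
  have lhs1 : ∑ i, ((εH (R1 i)) • (1 : H)) ⊗ₜ[k] R2 i = (1 : H ⊗[k] H) := by
    rw [Algebra.TensorProduct.one_def]
    calc ∑ i, ((εH (R1 i)) • (1 : H)) ⊗ₜ[k] R2 i
        = (1 : H) ⊗ₜ[k] (∑ i, (εH (R1 i)) • R2 i) := by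
          rw [TensorProduct.tmul_sum]
          exact Finset.sum_congr rfl fun i _ => TensorProduct.smul_tmul _ _ _
      _ = (1 : H) ⊗ₜ[k] (1 : H) := by rw [hqt.qt1a]
  rw [lhs1] at h2
  simp only [Algebra.TensorProduct.tmul_mul_tmul]
  exact h2.symm

lemma RmRinv (hqt : QT k H R1 R2) :
    (∑ i, R1 i ⊗ₜ[k] R2 i) * (∑ i, (SH (R1 i)) ⊗ₜ[k] R2 i) = 1 := by
  rcases hqt.isUnit with ⟨u, hu⟩
  have hinv : (∑ i, (SH (R1 i)) ⊗ₜ[k] R2 i) = ((u⁻¹ : (H ⊗[k] H)ˣ) : H ⊗[k] H) := by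
    calc (∑ i, (SH (R1 i)) ⊗ₜ[k] R2 i)
        = (∑ i, (SH (R1 i)) ⊗ₜ[k] R2 i) * ((u : H ⊗[k] H) * ((u⁻¹ : (H ⊗[k] H)ˣ) : H ⊗[k] H)) := by
          rw [Units.mul_inv, mul_one]
      _ = ((∑ i, (SH (R1 i)) ⊗ₜ[k] R2 i) * (∑ i, R1 i ⊗ₜ[k] R2 i))
            * ((u⁻¹ : (H ⊗[k] H)ˣ) : H ⊗[k] H) := by rw [← mul_assoc, hu]
      _ = ((u⁻¹ : (H ⊗[k] H)ˣ) : H ⊗[k] H) := by rw [RinvRm hqt, one_mul]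
  rw [hinv, ← hu, Units.mul_inv]

lemma qt4inv (hqt : QT k H R1 R2) (h : H) :
    Δ h * (∑ i, (SH (R1 i)) ⊗ₜ[k] R2 i)
      = (∑ i, (SH (R1 i)) ⊗ₜ[k] R2 i) * (TensorProduct.comm k H H (Δ h)) := by
  calc Δ h * (∑ i, (SH (R1 i)) ⊗ₜ[k] R2 i)
      = ((∑ i, (SH (R1 i)) ⊗ₜ[k] R2 i) * (∑ i, R1 i ⊗ₜ[k] R2 i)) * Δ h
          * (∑ i, (SH (R1 i)) ⊗ₜ[k] R2 i) := by rw [RinvRm hqt, one_mul]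
    _ = (∑ i, (SH (R1 i)) ⊗ₜ[k] R2 i) * ((∑ i, R1 i ⊗ₜ[k] R2 i) * Δ h)
          * (∑ i, (SH (R1 i)) ⊗ₜ[k] R2 i) := by rw [mul_assoc _ _ (Δ h)]
    _ = (∑ i, (SH (R1 i)) ⊗ₜ[k] R2 i) * ((TensorProduct.comm k H H (Δ h))
          * (∑ i, R1 i ⊗ₜ[k] R2 i)) * (∑ i, (SH (R1 i)) ⊗ₜ[k] R2 i) := by rw [hqt.qt4 h]
    _ = (∑ i, (SH (R1 i)) ⊗ₜ[k] R2 i) * (TensorProduct.comm k H H (Δ h))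
          * ((∑ i, R1 i ⊗ₜ[k] R2 i) * (∑ i, (SH (R1 i)) ⊗ₜ[k] R2 i)) := by
        rw [mul_assoc, mul_assoc, mul_assoc]
    _ = (∑ i, (SH (R1 i)) ⊗ₜ[k] R2 i) * (TensorProduct.comm k H H (Δ h)) := by
        rw [RmRinv hqt, mul_one]

def actD' : H ⊗[k] (X ⊗[k] Y) →ₗ[k] X ⊗[k] Y :=
  (TensorProduct.map (actT k H X) (actT k H Y)) ∘ₗ
    (TensorProduct.tensorTensorTensorComm k H H X Y).toLinearMap ∘ₗ
    (LinearMap.rTensor (X ⊗[k] Y) (Coalgebra.comul (R := k)))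

lemma actD'_tmul (g : H) (w : X ⊗[k] Y) :
    actD' (g ⊗ₜ[k] w) = (TensorProduct.map (actT k H X) (actT k H Y))
      ((TensorProduct.tensorTensorTensorComm k H H X Y) ((Δ g) ⊗ₜ[k] w)) := by
  simp [actD']

/-- `b ↦ b • y` -/
def aE (y : Y) : H →ₗ[k] Y := (actT k H Y) ∘ₗ (TensorProduct.mk k H Y).flip y

@[simp] lemma aE_apply (y : Y) (b : H) : aE (k := k) (H := H) (Y := Y) y b = b • y := rfl

/-- `a ↦ a • x` -/
def aX (x : X) : H →ₗ[k] X := (actT k H X) ∘ₗ (TensorProduct.mk k H X).flip x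

@[simp] lemma aX_apply (x : X) (a : H) : aX (k := k) (H := H) (X := X) x a = a • x := rfl

def tailK (y : Y) (i : ι) : ((H ⊗[k] H) ⊗[k] X) →ₗ[k] X ⊗[k] Y :=
  (TensorProduct.comm k Y X).toLinearMap ∘ₗ
    (TensorProduct.map ((aE y) ∘ₗ LinearMap.mulRight k (R1 i)) (actT k H X)) ∘ₗ
    (TensorProduct.assoc k H H X).toLinearMap ∘ₗ
    (LinearMap.rTensor X (TensorProduct.comm k H H).toLinearMap)

@[simp] lemma tailK_tmul (y : Y) (i : ι) (c d : H) (m : X) :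
    tailK (Y := Y) (X := X) (R1 := R1) y i ((c ⊗ₜ[k] d) ⊗ₜ[k] m)
      = (c • m) ⊗ₜ[k] ((d * R1 i) • y) := by
  simp [tailK]

def Kmap (y : Y) (t : H ⊗[k] X) (i : ι) : H ⊗[k] (H ⊗[k] H) →ₗ[k] H ⊗[k] (X ⊗[k] Y) :=
  (TensorProduct.map ((LinearMap.mulRight k (R2 i)) ∘ₗ (LinearMap.mul' k H))
      (tailK (R1 := R1) y i)) ∘ₗ
    (TensorProduct.tensorTensorTensorComm k H (H ⊗[k] H) H X).toLinearMap ∘ₗ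
    (TensorProduct.mk k (H ⊗[k] (H ⊗[k] H)) (H ⊗[k] X)).flip t

def Tmap (y : Y) (i : ι) (f : H) : H ⊗[k] X →ₗ[k] H ⊗[k] (X ⊗[k] Y) :=
  TensorProduct.map (LinearMap.mulRight k (R2 i))
    ((TensorProduct.mk k X Y).flip ((f * R1 i) • y))

def Wmap (y : Y) (FX : H →ₗ[k] H ⊗[k] X) (i : ι) :
    (H ⊗[k] H) ⊗[k] H →ₗ[k] H ⊗[k] (X ⊗[k] Y) :=
  (LinearMap.rTensor (X ⊗[k] Y) (LinearMap.mulRight k (R2 i))) ∘ₗ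
    (TensorProduct.assoc k H X Y).toLinearMap ∘ₗ
    (LinearMap.lTensor (H ⊗[k] X) ((aE y) ∘ₗ LinearMap.mulRight k (R1 i))) ∘ₗ
    (LinearMap.rTensor H ((postMul k H X) ∘ₗ (LinearMap.rTensor H FX)))

def Thmap (y : Y) (t : H ⊗[k] X) : H ⊗[k] H →ₗ[k] H ⊗[k] (X ⊗[k] Y) :=
  (TensorProduct.map (LinearMap.mul' k H) (LinearMap.id : X ⊗[k] Y →ₗ[k] X ⊗[k] Y)) ∘ₗ
    (TensorProduct.tensorTensorTensorComm k H X H Y).toLinearMap ∘ₗ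
    (TensorProduct.mk k (H ⊗[k] X) (H ⊗[k] Y) t) ∘ₗ
    (TensorProduct.map (LinearMap.id : H →ₗ[k] H) (aE y)) ∘ₗ
    (TensorProduct.comm k H H).toLinearMap

def Lmap (y : Y) (FX : H →ₗ[k] H ⊗[k] X) (i : ι) :
    (H ⊗[k] H) ⊗[k] H →ₗ[k] H ⊗[k] (X ⊗[k] Y) :=
  (postMul k H (X ⊗[k] Y)) ∘ₗ
    (LinearMap.lTensor (H ⊗[k] (X ⊗[k] Y)) (LinearMap.mulLeft k (R2 i))) ∘ₗ
    (LinearMap.rTensor H ((TensorProduct.assoc k H X Y).toLinearMap ∘ₗ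
       (TensorProduct.map FX ((aE y) ∘ₗ LinearMap.mulLeft k (R1 i)))))

section YDchainL
variable (lamX : X →ₗ[k] H ⊗[k] X) (x : X) (y : Y)

lemma lemB2 (v : H ⊗[k] H) (f : H) :
    postMul k H (X ⊗[k] Y) ((condL' (R1 := R1) (R2 := R2) lamX
        ((TensorProduct.map (actT k H X) (actT k H Y))
          ((TensorProduct.tensorTensorTensorComm k H H X Y) (v ⊗ₜ[k] (x ⊗ₜ[k] y))))) ⊗ₜ[k] f)
      = ∑ i, Lmap (R1 := R1) (R2 := R2) y (lamX ∘ₗ aX x) i (v ⊗ₜ[k] f) := by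
  induction v using TensorProduct.induction_on with
  | zero => simp [Lmap]
  | add v1 v2 h1 h2 =>
      simp only [map_add, LinearMap.add_apply, TensorProduct.tmul_add, TensorProduct.add_tmul, Finset.sum_add_distrib, add_mul, mul_add, h1, h2]
  | tmul a b =>
      simp only [TensorProduct.tensorTensorTensorComm_tmul, TensorProduct.map_tmul, actT_tmul]
      rw [condL'_tmul]
      rw [TensorProduct.sum_tmul, map_sum]
      refine Finset.sum_congr rfl fun i _ => ?_
      simp only [Lmap, LinearMap.comp_apply, LinearMap.rTensor_tmul, TensorProduct.map_tmul,
        LinearMap.lTensor_tmul, LinearEquiv.coe_coe, LinearMap.mulLeft_apply, aE_apply,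
        aX_apply]
      generalize lamX (a • x) = t
      induction t using TensorProduct.induction_on with
      | zero => simp
      | tmul u m =>
          simp only [TensorProduct.map_tmul, LinearMap.mulRight_apply, LinearMap.flip_apply,
            TensorProduct.mk_apply, postMul_tmul, TensorProduct.assoc_tmul,
            LinearMap.lTensor_tmul, LinearMap.mulLeft_apply]
          rw [mul_assoc, mul_smul]
      | add t1 t2 h1 h2 =>
      simp only [map_add, LinearMap.add_apply, TensorProduct.tmul_add, TensorProduct.add_tmul, Finset.sum_add_distrib, add_mul, mul_add, h1, h2]

lemma lemA1 (g f : H) :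
    (TensorProduct.map (LinearMap.mul' k H) (actD' (X := X) (Y := Y)))
        ((TensorProduct.tensorTensorTensorComm k H H H (X ⊗[k] Y))
          ((g ⊗ₜ[k] f) ⊗ₜ[k] condL' (R1 := R1) (R2 := R2) lamX (x ⊗ₜ[k] y)))
      = ∑ i, Kmap (R1 := R1) (R2 := R2) y (lamX x) i (g ⊗ₜ[k] (Δ f)) := by
  rw [condL'_tmul]
  generalize lamX x = t
  induction t using TensorProduct.induction_on with
  | zero => simp [Kmap]
  | add t1 t2 h1 h2 =>
      have Kadd : ∀ (i : ι) (z : H ⊗[k] (H ⊗[k] H)),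
          Kmap (R1 := R1) (R2 := R2) y (t1 + t2) i z
            = Kmap (R1 := R1) (R2 := R2) y t1 i z
              + Kmap (R1 := R1) (R2 := R2) y t2 i z := by
        intro i z
        simp only [Kmap, LinearMap.comp_apply, LinearMap.flip_apply, TensorProduct.mk_apply,
          TensorProduct.tmul_add, map_add, LinearMap.add_apply]
      simp only [map_add, TensorProduct.tmul_add, h1, h2, Kadd, Finset.sum_add_distrib]
  | tmul u m =>
      rw [TensorProduct.tmul_sum, map_sum, map_sum]
      refine Finset.sum_congr rfl fun i _ => ?_
      simp only [TensorProduct.map_tmul, LinearMap.mulRight_apply, LinearMap.flip_apply,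
        TensorProduct.mk_apply, TensorProduct.tensorTensorTensorComm_tmul,
        LinearMap.mul'_apply]
      rw [actD'_tmul]
      simp only [Kmap, LinearMap.comp_apply, LinearMap.flip_apply, TensorProduct.mk_apply,
        LinearEquiv.coe_coe]
      generalize Δ f = v
      induction v using TensorProduct.induction_on with
      | zero => simp
      | tmul c d =>
          simp only [TensorProduct.tensorTensorTensorComm_tmul, TensorProduct.map_tmul,
            actT_tmul, tailK_tmul, LinearMap.comp_apply, LinearMap.mul'_apply,
            LinearMap.mulRight_apply]
          rw [mul_assoc, mul_smul]
      | add v1 v2 h1 h2 =>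
      simp only [map_add, LinearMap.add_apply, TensorProduct.tmul_add, TensorProduct.add_tmul, Finset.sum_add_distrib, add_mul, mul_add, h1, h2]

lemma lemA2 (v : H ⊗[k] H) (f : H) :
    ∑ i, Kmap (R1 := R1) (R2 := R2) y (lamX x) i ((TensorProduct.assoc k H H H) (v ⊗ₜ[k] f))
      = ∑ i, Tmap (R1 := R1) (R2 := R2) y i f ((TensorProduct.map (LinearMap.mul' k H)
          (actT k H X)) ((TensorProduct.tensorTensorTensorComm k H H H X)
            (v ⊗ₜ[k] lamX x))) := by
  generalize lamX x = t
  induction v using TensorProduct.induction_on with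
  | zero => simp [Kmap, Tmap, TensorProduct.zero_tmul]
  | add v1 v2 h1 h2 =>
      simp only [map_add, LinearMap.add_apply, TensorProduct.tmul_add, TensorProduct.add_tmul, Finset.sum_add_distrib, add_mul, mul_add, h1, h2]
  | tmul a b =>
      refine Finset.sum_congr rfl fun i _ => ?_
      simp only [Kmap, Tmap, LinearMap.comp_apply, LinearMap.flip_apply, TensorProduct.mk_apply,
        LinearEquiv.coe_coe, TensorProduct.assoc_tmul]
      induction t using TensorProduct.induction_on with
      | zero => simp
      | tmul u m =>
          simp only [TensorProduct.tensorTensorTensorComm_tmul, TensorProduct.map_tmul,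
            LinearMap.comp_apply, LinearMap.mul'_apply, LinearMap.mulRight_apply, tailK_tmul,
            actT_tmul, LinearMap.flip_apply, TensorProduct.mk_apply]
      | add t1 t2 h1 h2 =>
      simp only [map_add, LinearMap.add_apply, TensorProduct.tmul_add, TensorProduct.add_tmul, Finset.sum_add_distrib, add_mul, mul_add, h1, h2]

lemma lemA3 (FX : H →ₗ[k] H ⊗[k] X) (i : ι) (v : H ⊗[k] H) (f : H) :
    Tmap (R1 := R1) (R2 := R2) y i f (postMul k H X ((LinearMap.rTensor H FX) v))
      = Wmap (R1 := R1) (R2 := R2) y FX i (v ⊗ₜ[k] f) := by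
  induction v using TensorProduct.induction_on with
  | zero => simp [Wmap, TensorProduct.zero_tmul]
  | add v1 v2 h1 h2 =>
      simp only [map_add, LinearMap.add_apply, TensorProduct.tmul_add, TensorProduct.add_tmul, Finset.sum_add_distrib, add_mul, mul_add, h1, h2]
  | tmul a b =>
      simp only [LinearMap.rTensor_tmul, Wmap, LinearMap.comp_apply]
      generalize FX a = t
      induction t using TensorProduct.induction_on with
      | zero => simp [Tmap]
      | tmul u m =>
          simp only [postMul_tmul, Tmap, TensorProduct.map_tmul, LinearMap.mulRight_apply,
            LinearMap.flip_apply, TensorProduct.mk_apply, LinearMap.rTensor_tmul,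
            LinearMap.lTensor_tmul, LinearEquiv.coe_coe, TensorProduct.assoc_tmul,
            LinearMap.comp_apply, aE_apply]
      | add t1 t2 h1 h2 =>
      simp only [map_add, LinearMap.add_apply, TensorProduct.tmul_add, TensorProduct.add_tmul, Finset.sum_add_distrib, add_mul, mul_add, h1, h2]

lemma lemA4 (FX : H →ₗ[k] H ⊗[k] X) (g : H) (v : H ⊗[k] H) :
    ∑ i, Wmap (R1 := R1) (R2 := R2) y FX i ((TensorProduct.assoc k H H H).symm (g ⊗ₜ[k] v))
      = Thmap y (FX g) ((TensorProduct.comm k H H) v * (∑ i, R1 i ⊗ₜ[k] R2 i)) := by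
  induction v using TensorProduct.induction_on with
  | zero => simp [Wmap, TensorProduct.tmul_zero, Thmap]
  | add v1 v2 h1 h2 =>
      simp only [map_add, LinearMap.add_apply, TensorProduct.tmul_add, TensorProduct.add_tmul, Finset.sum_add_distrib, add_mul, mul_add, h1, h2]
  | tmul c d =>
      simp only [TensorProduct.assoc_symm_tmul, TensorProduct.comm_tmul]
      rw [Finset.mul_sum, map_sum]
      refine Finset.sum_congr rfl fun i _ => ?_
      simp only [Algebra.TensorProduct.tmul_mul_tmul, Wmap, Thmap, LinearMap.comp_apply,
        LinearMap.rTensor_tmul, LinearEquiv.coe_coe]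
      generalize FX g = t
      induction t using TensorProduct.induction_on with
      | zero => simp
      | tmul u m =>
          simp only [LinearMap.rTensor_tmul, postMul_tmul, LinearMap.lTensor_tmul,
            TensorProduct.assoc_tmul, LinearMap.comp_apply, aE_apply,
            LinearMap.mulRight_apply, TensorProduct.comm_tmul, TensorProduct.map_tmul,
            LinearMap.id_coe, id_eq, TensorProduct.mk_apply,
            TensorProduct.tensorTensorTensorComm_tmul, LinearMap.mul'_apply]
          rw [mul_assoc]
      | add t1 t2 h1 h2 =>
      simp only [map_add, LinearMap.add_apply, TensorProduct.tmul_add, TensorProduct.add_tmul, Finset.sum_add_distrib, add_mul, mul_add, h1, h2]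

lemma lemB3 (FX : H →ₗ[k] H ⊗[k] X) (g : H) (v : H ⊗[k] H) :
    ∑ i, Lmap (R1 := R1) (R2 := R2) y FX i ((TensorProduct.assoc k H H H).symm (g ⊗ₜ[k] v))
      = Thmap y (FX g) ((∑ i, R1 i ⊗ₜ[k] R2 i) * v) := by
  induction v using TensorProduct.induction_on with
  | zero => simp [Lmap, TensorProduct.tmul_zero, Thmap]
  | add v1 v2 h1 h2 =>
      simp only [map_add, LinearMap.add_apply, TensorProduct.tmul_add, TensorProduct.add_tmul, Finset.sum_add_distrib, add_mul, mul_add, h1, h2]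
  | tmul c d =>
      simp only [TensorProduct.assoc_symm_tmul]
      rw [Finset.sum_mul, map_sum]
      refine Finset.sum_congr rfl fun i _ => ?_
      simp only [Algebra.TensorProduct.tmul_mul_tmul, Lmap, Thmap, LinearMap.comp_apply,
        LinearMap.rTensor_tmul, LinearEquiv.coe_coe, TensorProduct.map_tmul,
        LinearMap.mulLeft_apply, aE_apply]
      generalize FX g = t
      induction t using TensorProduct.induction_on with
      | zero => simp
      | tmul u m =>
          simp only [TensorProduct.assoc_tmul, LinearMap.lTensor_tmul, postMul_tmul,
            LinearMap.mulLeft_apply, TensorProduct.comm_tmul, TensorProduct.map_tmul,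
            LinearMap.id_coe, id_eq, TensorProduct.mk_apply, aE_apply,
            TensorProduct.tensorTensorTensorComm_tmul, LinearMap.mul'_apply,
            LinearMap.comp_apply]
      | add t1 t2 h1 h2 =>
      simp only [map_add, LinearMap.add_apply, TensorProduct.tmul_add, TensorProduct.add_tmul, Finset.sum_add_distrib, add_mul, mul_add, h1, h2]

lemma yd_condL (hqt : QT k H R1 R2) (lamX : X →ₗ[k] H ⊗[k] X)
    (hXyd : ydLa k H X (actT k H X) lamX = ydRa k H X (actT k H X) lamX)
    (h : H) (w : X ⊗[k] Y) :
    ydLa k H (X ⊗[k] Y) actD' (condL' (R1 := R1) (R2 := R2) lamX) (h ⊗ₜ[k] w)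
      = ydRa k H (X ⊗[k] Y) actD' (condL' (R1 := R1) (R2 := R2) lamX) (h ⊗ₜ[k] w) := by
  induction w using TensorProduct.induction_on with
  | zero => simp [TensorProduct.tmul_zero]
  | add u v h1 h2 => simp only [TensorProduct.tmul_add, map_add, h1, h2]
  | tmul x y =>
    set r := Coalgebra.Repr.arbitrary k h with hrdef
    have hr : ∑ p ∈ r.index, r.left p ⊗ₜ[k] r.right p = Δ h := r.eq
    set FX : H →ₗ[k] H ⊗[k] X := lamX ∘ₗ aX x with hFX
    have hyd2 : ∀ g : H,
        (TensorProduct.map (LinearMap.mul' k H) (actT k H X))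
          ((TensorProduct.tensorTensorTensorComm k H H H X) ((Δ g) ⊗ₜ[k] lamX x))
        = postMul k H X ((LinearMap.rTensor H FX) (Δ g)) := by
      intro g
      have e1 := ydLa_tmul (actT k H X) lamX g x
      have e2 := ydRa_tmul (actT k H X) lamX g x
      rw [← e1, hXyd, e2]
      rfl
    have expand1 : ∀ (G : ι → H ⊗[k] (H ⊗[k] H) →ₗ[k] H ⊗[k] (X ⊗[k] Y)),
        ∑ i, (G i) ((LinearMap.lTensor H Δ) (Δ h))
          = ∑ p ∈ r.index, ∑ i, (G i) (r.left p ⊗ₜ[k] Δ (r.right p)) := by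
      intro G
      rw [← hr]
      simp only [map_sum, LinearMap.lTensor_tmul]
      exact Finset.sum_comm
    have expand2 : ∀ (G : ι → (H ⊗[k] H) ⊗[k] H →ₗ[k] H ⊗[k] (X ⊗[k] Y)),
        ∑ i, (G i) ((LinearMap.rTensor H Δ) (Δ h))
          = ∑ p ∈ r.index, ∑ i, (G i) (Δ (r.left p) ⊗ₜ[k] r.right p) := by
      intro G
      rw [← hr]
      simp only [map_sum, LinearMap.rTensor_tmul]
      exact Finset.sum_comm
    have coa : (TensorProduct.assoc k H H H) ((LinearMap.rTensor H Δ) (Δ h))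
        = (LinearMap.lTensor H Δ) (Δ h) := Coalgebra.coassoc_apply h
    have coa2 : (TensorProduct.assoc k H H H).symm ((LinearMap.lTensor H Δ) (Δ h))
        = (LinearMap.rTensor H Δ) (Δ h) := Coalgebra.coassoc_symm_apply h
    calc ydLa k H (X ⊗[k] Y) actD' (condL' (R1 := R1) (R2 := R2) lamX) (h ⊗ₜ[k] (x ⊗ₜ[k] y))
        = (TensorProduct.map (LinearMap.mul' k H) actD')
            ((TensorProduct.tensorTensorTensorComm k H H H (X ⊗[k] Y))
              ((Δ h) ⊗ₜ[k] condL' (R1 := R1) (R2 := R2) lamX (x ⊗ₜ[k] y))) :=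
          ydLa_tmul _ _ h (x ⊗ₜ[k] y)
      _ = ∑ p ∈ r.index, ∑ i, Kmap (R1 := R1) (R2 := R2) y (lamX x) i
            (r.left p ⊗ₜ[k] Δ (r.right p)) := by
          rw [← hr, TensorProduct.sum_tmul, map_sum, map_sum]
          exact Finset.sum_congr rfl fun p _ => lemA1 lamX x y (r.left p) (r.right p)
      _ = ∑ i, (Kmap (R1 := R1) (R2 := R2) y (lamX x) i)
            ((LinearMap.lTensor H Δ) (Δ h)) := (expand1 _).symm
      _ = ∑ i, ((Kmap (R1 := R1) (R2 := R2) y (lamX x) i) ∘ₗ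
            (TensorProduct.assoc k H H H).toLinearMap) ((LinearMap.rTensor H Δ) (Δ h)) := by
          refine Finset.sum_congr rfl fun i _ => ?_
          rw [LinearMap.comp_apply, LinearEquiv.coe_coe, coa]
      _ = ∑ p ∈ r.index, ∑ i, ((Kmap (R1 := R1) (R2 := R2) y (lamX x) i) ∘ₗ
            (TensorProduct.assoc k H H H).toLinearMap) (Δ (r.left p) ⊗ₜ[k] r.right p) :=
          expand2 _
      _ = ∑ p ∈ r.index, ∑ i, Tmap (R1 := R1) (R2 := R2) y i (r.right p)
            ((TensorProduct.map (LinearMap.mul' k H) (actT k H X))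
              ((TensorProduct.tensorTensorTensorComm k H H H X)
                ((Δ (r.left p)) ⊗ₜ[k] lamX x))) := by
          refine Finset.sum_congr rfl fun p _ => ?_
          simp only [LinearMap.comp_apply, LinearEquiv.coe_coe]
          exact lemA2 lamX x y (Δ (r.left p)) (r.right p)
      _ = ∑ p ∈ r.index, ∑ i, Tmap (R1 := R1) (R2 := R2) y i (r.right p)
            (postMul k H X ((LinearMap.rTensor H FX) (Δ (r.left p)))) := by
          refine Finset.sum_congr rfl fun p _ => Finset.sum_congr rfl fun i _ => ?_
          rw [hyd2]
      _ = ∑ p ∈ r.index, ∑ i, Wmap (R1 := R1) (R2 := R2) y FX i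
            (Δ (r.left p) ⊗ₜ[k] r.right p) := by
          refine Finset.sum_congr rfl fun p _ => Finset.sum_congr rfl fun i _ => ?_
          exact lemA3 y FX i (Δ (r.left p)) (r.right p)
      _ = ∑ i, (Wmap (R1 := R1) (R2 := R2) y FX i) ((LinearMap.rTensor H Δ) (Δ h)) :=
          (expand2 _).symm
      _ = ∑ i, ((Wmap (R1 := R1) (R2 := R2) y FX i) ∘ₗ
            (TensorProduct.assoc k H H H).symm.toLinearMap) ((LinearMap.lTensor H Δ) (Δ h)) := by
          refine Finset.sum_congr rfl fun i _ => ?_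
          rw [LinearMap.comp_apply, LinearEquiv.coe_coe, coa2]
      _ = ∑ p ∈ r.index, ∑ i, ((Wmap (R1 := R1) (R2 := R2) y FX i) ∘ₗ
            (TensorProduct.assoc k H H H).symm.toLinearMap)
              (r.left p ⊗ₜ[k] Δ (r.right p)) := expand1 _
      _ = ∑ p ∈ r.index, Thmap y (FX (r.left p))
            ((TensorProduct.comm k H H) (Δ (r.right p)) * (∑ i, R1 i ⊗ₜ[k] R2 i)) := by
          refine Finset.sum_congr rfl fun p _ => ?_
          simp only [LinearMap.comp_apply, LinearEquiv.coe_coe]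
          exact lemA4 y FX (r.left p) (Δ (r.right p))
      _ = ∑ p ∈ r.index, Thmap y (FX (r.left p))
            ((∑ i, R1 i ⊗ₜ[k] R2 i) * Δ (r.right p)) := by
          refine Finset.sum_congr rfl fun p _ => ?_
          exact congrArg _ (hqt.qt4 (r.right p)).symm
      _ = ∑ p ∈ r.index, ∑ i, ((Lmap (R1 := R1) (R2 := R2) y FX i) ∘ₗ
            (TensorProduct.assoc k H H H).symm.toLinearMap)
              (r.left p ⊗ₜ[k] Δ (r.right p)) := by
          refine Finset.sum_congr rfl fun p _ => ?_
          simp only [LinearMap.comp_apply, LinearEquiv.coe_coe]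
          exact (lemB3 y FX (r.left p) (Δ (r.right p))).symm
      _ = ∑ i, ((Lmap (R1 := R1) (R2 := R2) y FX i) ∘ₗ
            (TensorProduct.assoc k H H H).symm.toLinearMap)
              ((LinearMap.lTensor H Δ) (Δ h)) := (expand1 _).symm
      _ = ∑ i, (Lmap (R1 := R1) (R2 := R2) y FX i) ((LinearMap.rTensor H Δ) (Δ h)) := by
          refine Finset.sum_congr rfl fun i _ => ?_
          rw [LinearMap.comp_apply, LinearEquiv.coe_coe, coa2]
      _ = ∑ p ∈ r.index, ∑ i, (Lmap (R1 := R1) (R2 := R2) y FX i)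
            (Δ (r.left p) ⊗ₜ[k] r.right p) := expand2 _
      _ = ∑ p ∈ r.index, postMul k H (X ⊗[k] Y)
            ((condL' (R1 := R1) (R2 := R2) lamX
              ((TensorProduct.map (actT k H X) (actT k H Y))
                ((TensorProduct.tensorTensorTensorComm k H H X Y)
                  ((Δ (r.left p)) ⊗ₜ[k] (x ⊗ₜ[k] y))))) ⊗ₜ[k] r.right p) := by
          refine Finset.sum_congr rfl fun p _ => ?_
          exact (lemB2 lamX x y (Δ (r.left p)) (r.right p)).symm
      _ = ydRa k H (X ⊗[k] Y) actD' (condL' (R1 := R1) (R2 := R2) lamX)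
            (h ⊗ₜ[k] (x ⊗ₜ[k] y)) := by
          rw [ydRa_tmul]
          conv_rhs => rw [← hr]
          rw [map_sum, map_sum]
          refine Finset.sum_congr rfl fun p _ => ?_
          simp only [LinearMap.rTensor_tmul, LinearMap.comp_apply, LinearMap.flip_apply,
            TensorProduct.mk_apply]
          rw [actD'_tmul]

end YDchainL

section YDchainR

def tailR (i : ι) : X ⊗[k] (H ⊗[k] Y) →ₗ[k] H ⊗[k] (X ⊗[k] Y) :=
  (LinearMap.rTensor (X ⊗[k] Y) (LinearMap.mulLeft k (SH (R1 i)))) ∘ₗ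
    (TensorProduct.assoc k H X Y).toLinearMap ∘ₗ
    (LinearMap.rTensor Y (TensorProduct.comm k X H).toLinearMap) ∘ₗ
    (TensorProduct.assoc k X H Y).symm.toLinearMap

@[simp] lemma tailR_tmul (i : ι) (m : X) (u : H) (n : Y) :
    tailR (X := X) (Y := Y) (R1 := R1) i (m ⊗ₜ[k] (u ⊗ₜ[k] n))
      = (SH (R1 i) * u) ⊗ₜ[k] (m ⊗ₜ[k] n) := by
  simp [tailR]

def tailR2 : H ⊗[k] (X ⊗[k] (H ⊗[k] Y)) →ₗ[k] H ⊗[k] (X ⊗[k] Y) :=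
  (LinearMap.rTensor (X ⊗[k] Y) (LinearMap.mul' k H)) ∘ₗ
    (TensorProduct.assoc k H H (X ⊗[k] Y)).symm.toLinearMap ∘ₗ
    (LinearMap.lTensor H ((TensorProduct.assoc k H X Y).toLinearMap ∘ₗ
      (LinearMap.rTensor Y (TensorProduct.comm k X H).toLinearMap) ∘ₗ
      (TensorProduct.assoc k X H Y).symm.toLinearMap))

@[simp] lemma tailR2_tmul (z : H) (m : X) (u : H) (n : Y) :
    tailR2 (X := X) (Y := Y) (z ⊗ₜ[k] (m ⊗ₜ[k] (u ⊗ₜ[k] n)))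
      = (z * u) ⊗ₜ[k] (m ⊗ₜ[k] n) := by
  simp [tailR2]

def FyIns (t : H ⊗[k] Y) : H →ₗ[k] H ⊗[k] Y :=
  (LinearMap.lTensor H (actT k H Y)) ∘ₗ
    (LinearMap.lTensor H (TensorProduct.comm k Y H).toLinearMap) ∘ₗ
    (TensorProduct.assoc k H Y H).toLinearMap ∘ₗ
    (TensorProduct.mk k (H ⊗[k] Y) H t)

@[simp] lemma FyIns_tmul (c : H) (n : Y) (f : H) :
    FyIns (Y := Y) (c ⊗ₜ[k] n) f = c ⊗ₜ[k] (f • n) := by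
  simp [FyIns]

def PmapY (t : H ⊗[k] Y) : H ⊗[k] H →ₗ[k] H ⊗[k] Y :=
  (TensorProduct.map (LinearMap.mul' k H) (actT k H Y)) ∘ₗ
    (TensorProduct.tensorTensorTensorComm k H H H Y).toLinearMap ∘ₗ
    (TensorProduct.mk k (H ⊗[k] H) (H ⊗[k] Y)).flip t

def Kpmap (x : X) (t : H ⊗[k] Y) (i : ι) :
    H ⊗[k] (H ⊗[k] H) →ₗ[k] H ⊗[k] (X ⊗[k] Y) :=
  tailR2 ∘ₗ (TensorProduct.map (LinearMap.mulRight k (SH (R1 i)))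
    (TensorProduct.map ((aX x) ∘ₗ LinearMap.mulRight k (R2 i)) (FyIns t)))

def Wpmap (x : X) (t : H ⊗[k] Y) (i : ι) :
    H ⊗[k] (H ⊗[k] H) →ₗ[k] H ⊗[k] (X ⊗[k] Y) :=
  (tailR (R1 := R1) i) ∘ₗ
    (TensorProduct.map ((aX x) ∘ₗ LinearMap.mulLeft k (R2 i)) (PmapY t))

def Tpmap (x : X) (i : ι) (g : H) : H ⊗[k] Y →ₗ[k] H ⊗[k] (X ⊗[k] Y) :=
  TensorProduct.map (LinearMap.mulLeft k (SH (R1 i))) (TensorProduct.mk k X Y ((R2 i * g) • x))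

def Lpmap (x : X) (FY : H →ₗ[k] H ⊗[k] Y) (i : ι) :
    (H ⊗[k] H) ⊗[k] H →ₗ[k] H ⊗[k] (X ⊗[k] Y) :=
  (postMul k H (X ⊗[k] Y)) ∘ₗ
    (LinearMap.rTensor H ((tailR (R1 := R1) i) ∘ₗ
      (TensorProduct.map ((aX x) ∘ₗ LinearMap.mulLeft k (R2 i)) FY)))

def Thpmap (x : X) (zy : H ⊗[k] Y) : H ⊗[k] H →ₗ[k] H ⊗[k] (X ⊗[k] Y) :=
  (TensorProduct.map (LinearMap.mul' k H) (LinearMap.id : X ⊗[k] Y →ₗ[k] X ⊗[k] Y)) ∘ₗ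
    (TensorProduct.tensorTensorTensorComm k H X H Y).toLinearMap ∘ₗ
    (TensorProduct.mk k (H ⊗[k] X) (H ⊗[k] Y)).flip zy ∘ₗ
    (TensorProduct.map (LinearMap.id : H →ₗ[k] H) (aX x))

variable (lamY : Y →ₗ[k] H ⊗[k] Y) (x : X) (y : Y)

lemma FyIns_eq (t : H ⊗[k] Y) (f : H) :
    FyIns (Y := Y) t f = (LinearMap.lTensor H (smulL k f)) t := by
  induction t using TensorProduct.induction_on with
  | zero => simp [FyIns]
  | tmul c n => simp
  | add t1 t2 h1 h2 =>
      simp only [FyIns, LinearMap.comp_apply, TensorProduct.mk_apply] at h1 h2 ⊢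
      simp only [TensorProduct.add_tmul, map_add, h1, h2]

lemma PmapY_eq (t : H ⊗[k] Y) (b f : H) :
    PmapY (Y := Y) t (b ⊗ₜ[k] f)
      = (LinearMap.rTensor Y (LinearMap.mulLeft k b)) ((LinearMap.lTensor H (smulL k f)) t) := by
  induction t using TensorProduct.induction_on with
  | zero => simp [PmapY]
  | tmul c n => simp [PmapY]
  | add t1 t2 h1 h2 =>
      simp only [PmapY, LinearMap.comp_apply, LinearMap.flip_apply, TensorProduct.mk_apply,
        LinearEquiv.coe_coe] at h1 h2 ⊢
      simp only [TensorProduct.tmul_add, map_add, h1, h2]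

lemma lemB2' (v : H ⊗[k] H) (f : H) :
    postMul k H (X ⊗[k] Y) ((condR' (R1 := R1) (R2 := R2) lamY
        ((TensorProduct.map (actT k H X) (actT k H Y))
          ((TensorProduct.tensorTensorTensorComm k H H X Y) (v ⊗ₜ[k] (x ⊗ₜ[k] y))))) ⊗ₜ[k] f)
      = ∑ i, Lpmap (R1 := R1) (R2 := R2) x (lamY ∘ₗ aE y) i (v ⊗ₜ[k] f) := by
  induction v using TensorProduct.induction_on with
  | zero => simp [Lpmap]
  | add v1 v2 h1 h2 =>
      simp only [map_add, LinearMap.add_apply, TensorProduct.tmul_add, TensorProduct.add_tmul, Finset.sum_add_distrib, add_mul, mul_add, h1, h2]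
  | tmul a b =>
      simp only [TensorProduct.tensorTensorTensorComm_tmul, TensorProduct.map_tmul, actT_tmul]
      rw [condR'_tmul]
      rw [TensorProduct.sum_tmul, map_sum]
      refine Finset.sum_congr rfl fun i _ => ?_
      simp only [Lpmap, LinearMap.comp_apply, LinearMap.rTensor_tmul, TensorProduct.map_tmul,
        LinearMap.mulLeft_apply, aE_apply, aX_apply]
      generalize lamY (b • y) = t
      induction t using TensorProduct.induction_on with
      | zero => simp [TensorProduct.tmul_zero, TensorProduct.zero_tmul]
      | tmul u n =>
          simp only [TensorProduct.map_tmul, LinearMap.mulLeft_apply, TensorProduct.mk_apply,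
            postMul_tmul, tailR_tmul]
          rw [mul_assoc, mul_smul]
      | add t1 t2 h1 h2 =>
          simp only [map_add, LinearMap.add_apply, TensorProduct.tmul_add, TensorProduct.add_tmul, Finset.sum_add_distrib, add_mul, mul_add, h1, h2]

lemma lemA1' (g f : H) :
    (TensorProduct.map (LinearMap.mul' k H) (actD' (X := X) (Y := Y)))
        ((TensorProduct.tensorTensorTensorComm k H H H (X ⊗[k] Y))
          ((g ⊗ₜ[k] f) ⊗ₜ[k] condR' (R1 := R1) (R2 := R2) lamY (x ⊗ₜ[k] y)))
      = ∑ i, Kpmap (R1 := R1) (R2 := R2) x (lamY y) i (g ⊗ₜ[k] (Δ f)) := by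
  rw [condR'_tmul]
  generalize lamY y = t
  induction t using TensorProduct.induction_on with
  | zero => simp [Kpmap, FyIns]
  | add t1 t2 h1 h2 =>
      have Kadd : ∀ (i : ι) (z : H ⊗[k] (H ⊗[k] H)),
          Kpmap (R1 := R1) (R2 := R2) x (t1 + t2) i z
            = Kpmap (R1 := R1) (R2 := R2) x t1 i z
              + Kpmap (R1 := R1) (R2 := R2) x t2 i z := by
        intro i z
        induction z using TensorProduct.induction_on with
        | zero => simp [TensorProduct.tmul_zero, TensorProduct.zero_tmul]
        | tmul g' v =>
            induction v using TensorProduct.induction_on with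
            | zero => simp [TensorProduct.tmul_zero]
            | tmul c d =>
                simp only [Kpmap, LinearMap.comp_apply, TensorProduct.map_tmul, FyIns,
                  TensorProduct.mk_apply, TensorProduct.assoc_tmul, LinearEquiv.coe_coe,
                  TensorProduct.add_tmul, map_add, LinearMap.lTensor_tmul,
                  TensorProduct.tmul_add, LinearMap.add_apply]
            | add v1 v2 g1 g2 =>
                simp only [map_add, LinearMap.add_apply, TensorProduct.tmul_add, TensorProduct.add_tmul, g1, g2]
                abel
        | add z1 z2 g1 g2 =>
            simp only [map_add, g1, g2]
            abel
      simp only [map_add, LinearMap.add_apply, TensorProduct.tmul_add, TensorProduct.add_tmul, Finset.sum_add_distrib, Kadd, h1, h2]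
  | tmul u n =>
      rw [TensorProduct.tmul_sum, map_sum, map_sum]
      refine Finset.sum_congr rfl fun i _ => ?_
      simp only [TensorProduct.map_tmul, LinearMap.mulLeft_apply, TensorProduct.mk_apply,
        TensorProduct.tensorTensorTensorComm_tmul, LinearMap.mul'_apply]
      rw [actD'_tmul]
      simp only [Kpmap, LinearMap.comp_apply, LinearEquiv.coe_coe]
      generalize Δ f = v
      induction v using TensorProduct.induction_on with
      | zero => simp [TensorProduct.tmul_zero, TensorProduct.zero_tmul]
      | tmul c d =>
          simp only [TensorProduct.tensorTensorTensorComm_tmul, TensorProduct.map_tmul,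
            actT_tmul, FyIns_tmul, tailR2_tmul, LinearMap.comp_apply,
            LinearMap.mulRight_apply, aX_apply]
          rw [mul_assoc, mul_smul]
      | add v1 v2 h1 h2 =>
          simp only [map_add, LinearMap.add_apply, TensorProduct.tmul_add, TensorProduct.add_tmul, Finset.sum_add_distrib, h1, h2]

lemma lemKTh (x : X) (t : H ⊗[k] Y) (v : H ⊗[k] H) (f : H) :
    ∑ i, Kpmap (R1 := R1) (R2 := R2) x t i ((TensorProduct.assoc k H H H) (v ⊗ₜ[k] f))
      = Thpmap x ((LinearMap.lTensor H (smulL k f)) t)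
          (v * (∑ i, (SH (R1 i)) ⊗ₜ[k] R2 i)) := by
  induction v using TensorProduct.induction_on with
  | zero => simp [Thpmap, TensorProduct.zero_tmul, Kpmap]
  | add v1 v2 h1 h2 =>
      simp only [map_add, LinearMap.add_apply, TensorProduct.tmul_add, TensorProduct.add_tmul, Finset.sum_add_distrib, add_mul, mul_add, h1, h2]
  | tmul a b =>
      simp only [TensorProduct.assoc_tmul]
      rw [Finset.mul_sum, map_sum]
      refine Finset.sum_congr rfl fun i _ => ?_
      simp only [Algebra.TensorProduct.tmul_mul_tmul, Kpmap, Thpmap, LinearMap.comp_apply,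
        TensorProduct.map_tmul, LinearMap.mulRight_apply, LinearMap.id_coe, id_eq, aX_apply,
        FyIns_eq]
      generalize (LinearMap.lTensor H (smulL k f)) t = z
      induction z using TensorProduct.induction_on with
      | zero => simp [TensorProduct.tmul_zero, TensorProduct.zero_tmul]
      | tmul c w =>
          simp only [tailR2_tmul, TensorProduct.mk_apply, LinearMap.flip_apply,
            LinearEquiv.coe_coe, TensorProduct.tensorTensorTensorComm_tmul,
            TensorProduct.map_tmul, LinearMap.mul'_apply, LinearMap.id_coe, id_eq]
      | add z1 z2 h1 h2 =>
          simp only [map_add, LinearMap.add_apply, TensorProduct.tmul_add,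
            TensorProduct.add_tmul, h1, h2]

lemma lemWTh (x : X) (t : H ⊗[k] Y) (v : H ⊗[k] H) (f : H) :
    ∑ i, Wpmap (R1 := R1) (R2 := R2) x t i ((TensorProduct.assoc k H H H) (v ⊗ₜ[k] f))
      = Thpmap x ((LinearMap.lTensor H (smulL k f)) t)
          ((∑ i, (SH (R1 i)) ⊗ₜ[k] R2 i) * ((TensorProduct.comm k H H) v)) := by
  induction v using TensorProduct.induction_on with
  | zero => simp [Thpmap, TensorProduct.zero_tmul, Wpmap]
  | add v1 v2 h1 h2 =>
      simp only [map_add, LinearMap.add_apply, TensorProduct.tmul_add, TensorProduct.add_tmul, Finset.sum_add_distrib, add_mul, mul_add, h1, h2]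
  | tmul a b =>
      simp only [TensorProduct.assoc_tmul, TensorProduct.comm_tmul]
      rw [Finset.sum_mul, map_sum]
      refine Finset.sum_congr rfl fun i _ => ?_
      simp only [Algebra.TensorProduct.tmul_mul_tmul, Wpmap, Thpmap,
        LinearMap.comp_apply, TensorProduct.map_tmul, LinearMap.mulLeft_apply,
        LinearMap.id_coe, id_eq, aX_apply, PmapY_eq]
      generalize (LinearMap.lTensor H (smulL k f)) t = z
      induction z using TensorProduct.induction_on with
      | zero => simp [TensorProduct.tmul_zero, TensorProduct.zero_tmul]
      | tmul c w =>
          simp only [LinearMap.rTensor_tmul, LinearMap.mulLeft_apply, tailR_tmul,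
            TensorProduct.mk_apply, LinearMap.flip_apply, LinearEquiv.coe_coe,
            TensorProduct.tensorTensorTensorComm_tmul, TensorProduct.map_tmul,
            LinearMap.mul'_apply, LinearMap.id_coe, id_eq]
          rw [mul_assoc]
      | add z1 z2 h1 h2 =>
          simp only [map_add, LinearMap.add_apply, TensorProduct.tmul_add,
            TensorProduct.add_tmul, h1, h2]

lemma tailR_mk (i : ι) (m : X) (z : H ⊗[k] Y) :
    tailR (X := X) (Y := Y) (R1 := R1) i (m ⊗ₜ[k] z)
      = (TensorProduct.map (LinearMap.mulLeft k (SH (R1 i))) (TensorProduct.mk k X Y m)) z := by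
  induction z using TensorProduct.induction_on with
  | zero => simp [TensorProduct.tmul_zero]
  | tmul u n => simp
  | add z1 z2 h1 h2 =>
      simp only [map_add, TensorProduct.tmul_add, h1, h2]

lemma lemWT (x : X) (t : H ⊗[k] Y) (i : ι) (g : H) (v : H ⊗[k] H) :
    Wpmap (R1 := R1) (R2 := R2) x t i (g ⊗ₜ[k] v)
      = (TensorProduct.map (LinearMap.mulLeft k (SH (R1 i)))
          (TensorProduct.mk k X Y ((R2 i * g) • x)))
            ((TensorProduct.map (LinearMap.mul' k H) (actT k H Y))
              ((TensorProduct.tensorTensorTensorComm k H H H Y) (v ⊗ₜ[k] t))) := by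
  simp only [Wpmap, LinearMap.comp_apply, TensorProduct.map_tmul, LinearMap.mulLeft_apply,
    aX_apply, PmapY, LinearMap.flip_apply, TensorProduct.mk_apply, LinearEquiv.coe_coe,
    tailR_mk, mul_smul]

lemma lemT'L (x : X) (FY : H →ₗ[k] H ⊗[k] Y) (i : ι) (g : H) (v : H ⊗[k] H) :
    Lpmap (R1 := R1) (R2 := R2) x FY i ((TensorProduct.assoc k H H H).symm (g ⊗ₜ[k] v))
      = (TensorProduct.map (LinearMap.mulLeft k (SH (R1 i)))
          (TensorProduct.mk k X Y ((R2 i * g) • x)))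
            (postMul k H Y ((LinearMap.rTensor H FY) v)) := by
  induction v using TensorProduct.induction_on with
  | zero => simp [Lpmap, TensorProduct.tmul_zero]
  | add v1 v2 h1 h2 =>
      simp only [map_add, LinearMap.add_apply, TensorProduct.tmul_add, TensorProduct.add_tmul, h1, h2]
  | tmul c d =>
      simp only [TensorProduct.assoc_symm_tmul, Lpmap, LinearMap.comp_apply,
        LinearMap.rTensor_tmul, TensorProduct.map_tmul, LinearMap.mulLeft_apply, aX_apply]
      generalize FY c = t
      induction t using TensorProduct.induction_on with
      | zero => simp [TensorProduct.tmul_zero]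
      | tmul u n =>
          simp only [tailR_tmul, postMul_tmul, TensorProduct.map_tmul,
            LinearMap.mulLeft_apply, TensorProduct.mk_apply, mul_smul]
          rw [mul_assoc]
      | add t1 t2 h1 h2 =>
          simp only [map_add, LinearMap.add_apply, TensorProduct.tmul_add, TensorProduct.add_tmul, h1, h2]

lemma yd_condR (hqt : QT k H R1 R2) (lamY : Y →ₗ[k] H ⊗[k] Y)
    (hYyd : ydLa k H Y (actT k H Y) lamY = ydRa k H Y (actT k H Y) lamY)
    (h : H) (w : X ⊗[k] Y) :
    ydLa k H (X ⊗[k] Y) actD' (condR' (R1 := R1) (R2 := R2) lamY) (h ⊗ₜ[k] w)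
      = ydRa k H (X ⊗[k] Y) actD' (condR' (R1 := R1) (R2 := R2) lamY) (h ⊗ₜ[k] w) := by
  induction w using TensorProduct.induction_on with
  | zero => simp [TensorProduct.tmul_zero]
  | add u v h1 h2 => simp only [TensorProduct.tmul_add, map_add, h1, h2]
  | tmul x y =>
    set r := Coalgebra.Repr.arbitrary k h with hrdef
    have hr : ∑ p ∈ r.index, r.left p ⊗ₜ[k] r.right p = Δ h := r.eq
    set FY : H →ₗ[k] H ⊗[k] Y := lamY ∘ₗ aE y with hFY
    have hyd2 : ∀ f : H,
        (TensorProduct.map (LinearMap.mul' k H) (actT k H Y))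
          ((TensorProduct.tensorTensorTensorComm k H H H Y) ((Δ f) ⊗ₜ[k] lamY y))
        = postMul k H Y ((LinearMap.rTensor H FY) (Δ f)) := by
      intro f
      have e1 := ydLa_tmul (actT k H Y) lamY f y
      have e2 := ydRa_tmul (actT k H Y) lamY f y
      rw [← e1, hYyd, e2]
      rfl
    have expand1 : ∀ (G : ι → H ⊗[k] (H ⊗[k] H) →ₗ[k] H ⊗[k] (X ⊗[k] Y)),
        ∑ i, (G i) ((LinearMap.lTensor H Δ) (Δ h))
          = ∑ p ∈ r.index, ∑ i, (G i) (r.left p ⊗ₜ[k] Δ (r.right p)) := by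
      intro G
      rw [← hr]
      simp only [map_sum, LinearMap.lTensor_tmul]
      exact Finset.sum_comm
    have expand2 : ∀ (G : ι → (H ⊗[k] H) ⊗[k] H →ₗ[k] H ⊗[k] (X ⊗[k] Y)),
        ∑ i, (G i) ((LinearMap.rTensor H Δ) (Δ h))
          = ∑ p ∈ r.index, ∑ i, (G i) (Δ (r.left p) ⊗ₜ[k] r.right p) := by
      intro G
      rw [← hr]
      simp only [map_sum, LinearMap.rTensor_tmul]
      exact Finset.sum_comm
    have coa : (TensorProduct.assoc k H H H) ((LinearMap.rTensor H Δ) (Δ h))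
        = (LinearMap.lTensor H Δ) (Δ h) := Coalgebra.coassoc_apply h
    have coa2 : (TensorProduct.assoc k H H H).symm ((LinearMap.lTensor H Δ) (Δ h))
        = (LinearMap.rTensor H Δ) (Δ h) := Coalgebra.coassoc_symm_apply h
    calc ydLa k H (X ⊗[k] Y) actD' (condR' (R1 := R1) (R2 := R2) lamY) (h ⊗ₜ[k] (x ⊗ₜ[k] y))
        = (TensorProduct.map (LinearMap.mul' k H) actD')
            ((TensorProduct.tensorTensorTensorComm k H H H (X ⊗[k] Y))
              ((Δ h) ⊗ₜ[k] condR' (R1 := R1) (R2 := R2) lamY (x ⊗ₜ[k] y))) :=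
          ydLa_tmul _ _ h (x ⊗ₜ[k] y)
      _ = ∑ p ∈ r.index, ∑ i, Kpmap (R1 := R1) (R2 := R2) x (lamY y) i
            (r.left p ⊗ₜ[k] Δ (r.right p)) := by
          rw [← hr, TensorProduct.sum_tmul, map_sum, map_sum]
          exact Finset.sum_congr rfl fun p _ => lemA1' lamY x y (r.left p) (r.right p)
      _ = ∑ i, (Kpmap (R1 := R1) (R2 := R2) x (lamY y) i)
            ((LinearMap.lTensor H Δ) (Δ h)) := (expand1 _).symm
      _ = ∑ i, ((Kpmap (R1 := R1) (R2 := R2) x (lamY y) i) ∘ₗ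
            (TensorProduct.assoc k H H H).toLinearMap) ((LinearMap.rTensor H Δ) (Δ h)) := by
          refine Finset.sum_congr rfl fun i _ => ?_
          rw [LinearMap.comp_apply, LinearEquiv.coe_coe, coa]
      _ = ∑ p ∈ r.index, ∑ i, ((Kpmap (R1 := R1) (R2 := R2) x (lamY y) i) ∘ₗ
            (TensorProduct.assoc k H H H).toLinearMap) (Δ (r.left p) ⊗ₜ[k] r.right p) :=
          expand2 _
      _ = ∑ p ∈ r.index, Thpmap x ((LinearMap.lTensor H (smulL k (r.right p))) (lamY y))
            ((Δ (r.left p)) * (∑ i, (SH (R1 i)) ⊗ₜ[k] R2 i)) := by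
          refine Finset.sum_congr rfl fun p _ => ?_
          simp only [LinearMap.comp_apply, LinearEquiv.coe_coe]
          exact lemKTh x (lamY y) (Δ (r.left p)) (r.right p)
      _ = ∑ p ∈ r.index, Thpmap x ((LinearMap.lTensor H (smulL k (r.right p))) (lamY y))
            ((∑ i, (SH (R1 i)) ⊗ₜ[k] R2 i) * ((TensorProduct.comm k H H) (Δ (r.left p)))) := by
          refine Finset.sum_congr rfl fun p _ => ?_
          exact congrArg _ (qt4inv hqt (r.left p))
      _ = ∑ p ∈ r.index, ∑ i, ((Wpmap (R1 := R1) (R2 := R2) x (lamY y) i) ∘ₗ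
            (TensorProduct.assoc k H H H).toLinearMap) (Δ (r.left p) ⊗ₜ[k] r.right p) := by
          refine Finset.sum_congr rfl fun p _ => ?_
          simp only [LinearMap.comp_apply, LinearEquiv.coe_coe]
          exact (lemWTh x (lamY y) (Δ (r.left p)) (r.right p)).symm
      _ = ∑ i, ((Wpmap (R1 := R1) (R2 := R2) x (lamY y) i) ∘ₗ
            (TensorProduct.assoc k H H H).toLinearMap) ((LinearMap.rTensor H Δ) (Δ h)) :=
          (expand2 _).symm
      _ = ∑ i, (Wpmap (R1 := R1) (R2 := R2) x (lamY y) i)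
            ((LinearMap.lTensor H Δ) (Δ h)) := by
          refine Finset.sum_congr rfl fun i _ => ?_
          rw [LinearMap.comp_apply, LinearEquiv.coe_coe, coa]
      _ = ∑ p ∈ r.index, ∑ i, (Wpmap (R1 := R1) (R2 := R2) x (lamY y) i)
            (r.left p ⊗ₜ[k] Δ (r.right p)) := expand1 _
      _ = ∑ p ∈ r.index, ∑ i, (TensorProduct.map (LinearMap.mulLeft k (SH (R1 i)))
            (TensorProduct.mk k X Y ((R2 i * r.left p) • x)))
              (postMul k H Y ((LinearMap.rTensor H FY) (Δ (r.right p)))) := by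
          refine Finset.sum_congr rfl fun p _ => Finset.sum_congr rfl fun i _ => ?_
          rw [lemWT, hyd2]
      _ = ∑ p ∈ r.index, ∑ i, ((Lpmap (R1 := R1) (R2 := R2) x FY i) ∘ₗ
            (TensorProduct.assoc k H H H).symm.toLinearMap)
              (r.left p ⊗ₜ[k] Δ (r.right p)) := by
          refine Finset.sum_congr rfl fun p _ => Finset.sum_congr rfl fun i _ => ?_
          simp only [LinearMap.comp_apply, LinearEquiv.coe_coe]
          exact (lemT'L x FY i (r.left p) (Δ (r.right p))).symm
      _ = ∑ i, ((Lpmap (R1 := R1) (R2 := R2) x FY i) ∘ₗ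
            (TensorProduct.assoc k H H H).symm.toLinearMap)
              ((LinearMap.lTensor H Δ) (Δ h)) := (expand1 _).symm
      _ = ∑ i, (Lpmap (R1 := R1) (R2 := R2) x FY i) ((LinearMap.rTensor H Δ) (Δ h)) := by
          refine Finset.sum_congr rfl fun i _ => ?_
          rw [LinearMap.comp_apply, LinearEquiv.coe_coe, coa2]
      _ = ∑ p ∈ r.index, ∑ i, (Lpmap (R1 := R1) (R2 := R2) x FY i)
            (Δ (r.left p) ⊗ₜ[k] r.right p) := expand2 _
      _ = ∑ p ∈ r.index, postMul k H (X ⊗[k] Y)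
            ((condR' (R1 := R1) (R2 := R2) lamY
              ((TensorProduct.map (actT k H X) (actT k H Y))
                ((TensorProduct.tensorTensorTensorComm k H H X Y)
                  ((Δ (r.left p)) ⊗ₜ[k] (x ⊗ₜ[k] y))))) ⊗ₜ[k] r.right p) := by
          refine Finset.sum_congr rfl fun p _ => ?_
          exact (lemB2' lamY x y (Δ (r.left p)) (r.right p)).symm
      _ = ydRa k H (X ⊗[k] Y) actD' (condR' (R1 := R1) (R2 := R2) lamY)
            (h ⊗ₜ[k] (x ⊗ₜ[k] y)) := by
          rw [ydRa_tmul]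
          conv_rhs => rw [← hr]
          rw [map_sum, map_sum]
          refine Finset.sum_congr rfl fun p _ => ?_
          simp only [LinearMap.rTensor_tmul, LinearMap.comp_apply, LinearMap.flip_apply,
            TensorProduct.mk_apply]
          rw [actD'_tmul]

end YDchainR

end CondAux

section CotensorYD

variable (k H X Y : Type) [Field k] [Ring H] [HopfAlgebra k H]
variable [AddCommGroup X] [Module k X] [Module H X] [IsScalarTower k H X] [SMulCommClass H k X]
variable [AddCommGroup Y] [Module k Y] [Module H Y] [IsScalarTower k H Y] [SMulCommClass H k Y]
variable {ι : Type} [Fintype ι] (R1 R2 : ι → H)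

/-- Let `(H,R)` be quasitriangular and `X`, `Y` Yetter–Drinfeld modules.
On the cotensor product `X □_{₍R₎H} Y = {w : condL w = condR w}`, the coaction
`λ(∑ xᵢ⊗yᵢ) = ∑ (xᵢ)₍₋₁₎R² ⊗ (xᵢ)₍₀₎ ⊗ R¹·yᵢ` together with the diagonal `H`-action
defines a left-left Yetter–Drinfeld module structure: the subspace is stable under the
diagonal action and the coaction, which satisfy the comodule laws and the
Yetter–Drinfeld compatibility condition. -/
theorem cotensor_yetterDrinfeld (hqt : QT k H R1 R2)
    (lamX : X →ₗ[k] H ⊗[k] X) (lamY : Y →ₗ[k] H ⊗[k] Y)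
    (hXcounit : ∀ x : X, (TensorProduct.lid k X)
        ((LinearMap.rTensor X (Coalgebra.counit (R := k))) (lamX x)) = x)
    (hXcoassoc : (LinearMap.rTensor X (Coalgebra.comul (R := k))) ∘ₗ lamX
        = (TensorProduct.assoc k H H X).symm.toLinearMap ∘ₗ
          (LinearMap.lTensor H lamX) ∘ₗ lamX)
    (hXyd : ydLa k H X (actT k H X) lamX = ydRa k H X (actT k H X) lamX)
    (hYcounit : ∀ y : Y, (TensorProduct.lid k Y)
        ((LinearMap.rTensor Y (Coalgebra.counit (R := k))) (lamY y)) = y)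
    (hYcoassoc : (LinearMap.rTensor Y (Coalgebra.comul (R := k))) ∘ₗ lamY
        = (TensorProduct.assoc k H H Y).symm.toLinearMap ∘ₗ
          (LinearMap.lTensor H lamY) ∘ₗ lamY)
    (hYyd : ydLa k H Y (actT k H Y) lamY = ydRa k H Y (actT k H Y) lamY)
    (w : X ⊗[k] Y)
    (hw : condL k H X Y R1 R2 lamX w = condR k H X Y R1 R2 lamY w) :
    -- the diagonal action preserves the cotensor product
    (∀ h : H, condL k H X Y R1 R2 lamX (actD k H X Y (h ⊗ₜ[k] w))
        = condR k H X Y R1 R2 lamY (actD k H X Y (h ⊗ₜ[k] w))) ∧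
    -- counit law for λ
    ((TensorProduct.lid k (X ⊗[k] Y))
        ((LinearMap.rTensor (X ⊗[k] Y) (Coalgebra.counit (R := k)))
          (condL k H X Y R1 R2 lamX w)) = w) ∧
    -- coassociativity of λ
    ((LinearMap.rTensor (X ⊗[k] Y) (Coalgebra.comul (R := k)))
        (condL k H X Y R1 R2 lamX w)
      = (TensorProduct.assoc k H H (X ⊗[k] Y)).symm
          ((LinearMap.lTensor H (condL k H X Y R1 R2 lamX))
            (condL k H X Y R1 R2 lamX w))) ∧
    -- Yetter–Drinfeld compatibility on the cotensor product
    (∀ h : H, ydLa k H (X ⊗[k] Y) (actD k H X Y) (condL k H X Y R1 R2 lamX) (h ⊗ₜ[k] w)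
        = ydRa k H (X ⊗[k] Y) (actD k H X Y) (condL k H X Y R1 R2 lamX) (h ⊗ₜ[k] w)) := by
  have hw' : condL' (R1 := R1) (R2 := R2) lamX w = condR' (R1 := R1) (R2 := R2) lamY w := hw
  refine ⟨?_, ?_, ?_, ?_⟩
  · intro h
    show condL' (R1 := R1) (R2 := R2) lamX (actD' (h ⊗ₜ[k] w))
        = condR' (R1 := R1) (R2 := R2) lamY (actD' (h ⊗ₜ[k] w))
    have e1 := lam_act_eq (M := X ⊗[k] Y) actD' (condL' (R1 := R1) (R2 := R2) lamX) h w
      (fun g => yd_condL hqt lamX hXyd g w)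
    have e2 := lam_act_eq (M := X ⊗[k] Y) actD' (condR' (R1 := R1) (R2 := R2) lamY) h w
      (fun g => yd_condR hqt lamY hYyd g w)
    rw [e1, e2]
    have hF : ((ydLa k H (X ⊗[k] Y) actD' (condL' (R1 := R1) (R2 := R2) lamX)) ∘ₗ
          (TensorProduct.mk k H (X ⊗[k] Y)).flip w)
        = ((ydLa k H (X ⊗[k] Y) actD' (condR' (R1 := R1) (R2 := R2) lamY)) ∘ₗ
          (TensorProduct.mk k H (X ⊗[k] Y)).flip w) := by
      apply LinearMap.ext
      intro g
      simp only [LinearMap.comp_apply, LinearMap.flip_apply, TensorProduct.mk_apply]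
      rw [ydLa_tmul, ydLa_tmul, hw']
    rw [hF]
  · exact counit_law hqt lamX hXcounit w
  · exact coassoc_law hqt lamX hXcoassoc w
  · intro h
    exact yd_condL hqt lamX hXyd h w

end CotensorYD

end
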